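/- Let G be a finite simple 3-regular graph on n vertices. Then for every subset U of the vertex set, the number of connected components of the induced subgraph on the complement of U that have an odd number of vertices is at most |U| + n/5. -/

import Mathlib

open Finset

private lemma even_sum_degree_closed {α : Type*} [Fintype α] [DecidableEq α]
    (H : SimpleGraph α) [DecidableRel H.Adj] (S : Finset α)
    (hS : ∀ v ∈ S, ∀ w, H.Adj v w → w ∈ S) :
    Even (∑ v ∈ S, H.degree v) := by
  classical
  let H' : SimpleGraph α :=
    { Adj := fun a b => H.Adj a b ∧ a ∈ S ∧ b ∈ S
      symm := ⟨fun a b h => ⟨h.1.symm, h.2.2, h.2.1⟩⟩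
      loopless := ⟨fun a h => H.loopless.irrefl a h.1⟩ }
  haveI : DecidableRel H'.Adj := fun a b => instDecidableAnd
  have hdeg : ∀ v ∈ S, H'.degree v = H.degree v := by
    intro v hv
    unfold SimpleGraph.degree
    congr 1
    ext w
    simp only [SimpleGraph.mem_neighborFinset]
    exact ⟨fun h => h.1, fun h => ⟨h, hv, hS v hv w h⟩⟩
  have hdeg0 : ∀ v, v ∉ S → H'.degree v = 0 := by
    intro v hv
    rw [SimpleGraph.degree, Finset.card_eq_zero, Finset.eq_empty_iff_forall_notMem]
    intro w hw
    rw [SimpleGraph.mem_neighborFinset] at hw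
    exact hv hw.2.1
  have hsum : ∑ v, H'.degree v = ∑ v ∈ S, H.degree v := by
    rw [← Finset.sum_subset (Finset.subset_univ S) (fun v _ hv => hdeg0 v hv)]
    exact Finset.sum_congr rfl hdeg
  rw [← hsum, SimpleGraph.sum_degrees_eq_twice_card_edges]
  exact even_two_mul _

/-- For a finite simple 3-regular graph `G` on `n` vertices and any `U ⊆ V(G)`,
the number of odd connected components of `G − U` is at most `|U| + n/5`. -/
theorem stmt_6 {V : Type*} [Fintype V] [DecidableEq V] (G : SimpleGraph V)
    [DecidableRel G.Adj] (hreg : G.IsRegularOfDegree 3) (U : Finset V) :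
    5 * Nat.card {C : (G.induce ((↑U : Set V)ᶜ)).ConnectedComponent // Odd C.supp.ncard}
      ≤ 5 * U.card + Fintype.card V := by
  classical
  set W : Set V := (↑U : Set V)ᶜ with hW
  set H : SimpleGraph W := G.induce W with hH
  haveI : DecidableRel H.Adj := fun a b => ‹DecidableRel G.Adj› a b
  haveI : Fintype H.ConnectedComponent := Fintype.ofFinite _
  set F : H.ConnectedComponent → Finset W :=
    fun C => Finset.univ.filter (fun v => H.connectedComponentMk v = C) with hF
  have hsupp : ∀ C : H.ConnectedComponent, C.supp.ncard = (F C).card := by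
    intro C
    rw [Set.ncard_eq_toFinset_card']
    congr 1
    ext v
    rw [Set.mem_toFinset]
    simp [hF, SimpleGraph.ConnectedComponent.supp]
  set dU : W → ℕ := fun v => (U.filter (fun u => G.Adj u ↑v)).card with hdU
  -- degree split
  have hsplit : ∀ v : W, H.degree v + dU v = 3 := by
    intro v
    have h1 : H.degree v = ((G.neighborFinset ↑v).filter (fun w => w ∈ W)).card := by
      rw [SimpleGraph.degree]
      apply Finset.card_bij (fun (w : W) _ => (w : V))
      · intro w hw
        rw [SimpleGraph.mem_neighborFinset] at hw
        refine Finset.mem_filter.2 ⟨?_, w.2⟩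
        rw [SimpleGraph.mem_neighborFinset]
        exact hw
      · intro a _ b _ hab
        exact Subtype.coe_injective hab
      · intro w hw
        rw [Finset.mem_filter, SimpleGraph.mem_neighborFinset] at hw
        refine ⟨⟨w, hw.2⟩, ?_, rfl⟩
        rw [SimpleGraph.mem_neighborFinset]
        exact hw.1
    have h2 : dU v = ((G.neighborFinset ↑v).filter (fun w => ¬(w ∈ W))).card := by
      show (U.filter (fun u => G.Adj u ↑v)).card = _
      congr 1
      ext w
      simp only [Finset.mem_filter, SimpleGraph.mem_neighborFinset, hW, Set.mem_compl_iff,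
        Finset.mem_coe, not_not]
      constructor
      · rintro ⟨hwU, hadj⟩; exact ⟨hadj.symm, hwU⟩
      · rintro ⟨hadj, hwU⟩; exact ⟨hwU, hadj.symm⟩
    rw [h1, h2, Finset.card_filter_add_card_filter_not,
      SimpleGraph.card_neighborFinset_eq_degree]
    exact hreg ↑v
  -- components are closed under adjacency
  have hclosed : ∀ C : H.ConnectedComponent, ∀ v ∈ F C, ∀ w, H.Adj v w → w ∈ F C := by
    intro C v hv w hvw
    simp only [hF, Finset.mem_filter, Finset.mem_univ, true_and] at hv ⊢
    rw [← hv]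
    exact SimpleGraph.ConnectedComponent.connectedComponentMk_eq_of_adj hvw.symm
  have heven : ∀ C : H.ConnectedComponent, Even (∑ v ∈ F C, H.degree v) :=
    fun C => even_sum_degree_closed H (F C) (hclosed C)
  have hnb : ∀ C : H.ConnectedComponent, ∀ v ∈ F C, H.degree v ≤ (F C).card - 1 := by
    intro C v hv
    have hsub : H.neighborFinset v ⊆ (F C).erase v := by
      intro w hw
      rw [SimpleGraph.mem_neighborFinset] at hw
      exact Finset.mem_erase.2 ⟨fun h => H.loopless.irrefl v (h ▸ hw), hclosed C v hv w hw⟩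
    calc H.degree v = (H.neighborFinset v).card := rfl
      _ ≤ ((F C).erase v).card := Finset.card_le_card hsub
      _ = (F C).card - 1 := Finset.card_erase_of_mem hv
  have hkey : ∀ C : H.ConnectedComponent,
      3 * (F C).card = (∑ v ∈ F C, H.degree v) + ∑ v ∈ F C, dU v := by
    intro C
    rw [← Finset.sum_add_distrib]
    rw [Finset.sum_congr rfl (fun v _ => hsplit v), Finset.sum_const, smul_eq_mul, mul_comm]
  -- components with small boundary are big
  have hbig : ∀ C : H.ConnectedComponent, Odd (F C).card →
      (∑ v ∈ F C, dU v) ≤ 2 → 5 ≤ (F C).card := by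
    intro C hodd hb
    have h1 : (∑ v ∈ F C, H.degree v) ≤ (F C).card * ((F C).card - 1) := by
      calc (∑ v ∈ F C, H.degree v) ≤ ∑ _v ∈ F C, ((F C).card - 1) :=
            Finset.sum_le_sum (hnb C)
        _ = (F C).card * ((F C).card - 1) := by rw [Finset.sum_const, smul_eq_mul]
    have h2 := hkey C
    obtain ⟨k, hk⟩ := hodd
    obtain ⟨j, hj⟩ := heven C
    by_contra hlt
    push_neg at hlt
    have hcase : (F C).card = 1 ∨ (F C).card = 3 := by omega
    rcases hcase with h | h <;> rw [h] at h1 h2 <;> omega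
  -- the odd components
  set Ω : Finset H.ConnectedComponent :=
    Finset.univ.filter (fun C => Odd (F C).card) with hΩ
  set A : Finset H.ConnectedComponent :=
    Ω.filter (fun C => (∑ v ∈ F C, dU v) ≤ 2) with hA
  set B : Finset H.ConnectedComponent :=
    Ω.filter (fun C => ¬((∑ v ∈ F C, dU v) ≤ 2)) with hB
  have hAB : A.card + B.card = Ω.card :=
    Finset.card_filter_add_card_filter_not _
  -- bound on A
  have hAbound : 5 * A.card ≤ Fintype.card V := by
    have h5 : A.card * 5 ≤ ∑ C ∈ A, (F C).card := by
      have := Finset.card_nsmul_le_sum A (fun C => (F C).card) 5 (by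
        intro C hC
        rw [hA, Finset.mem_filter, hΩ, Finset.mem_filter] at hC
        exact hbig C hC.1.2 hC.2)
      simpa using this
    have hle : ∑ C ∈ A, (F C).card ≤ ∑ C ∈ Finset.univ, (F C).card :=
      Finset.sum_le_sum_of_subset (Finset.subset_univ A)
    have htot : ∑ C ∈ Finset.univ, (F C).card = Fintype.card W := by
      rw [← Finset.card_univ]
      exact (Finset.card_eq_sum_card_fiberwise (fun v _ => Finset.mem_univ _)).symm
    have hWV : Fintype.card W ≤ Fintype.card V := Fintype.card_le_of_injective _
      Subtype.coe_injective
    omega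
  -- bound on B
  have hBbound : B.card ≤ U.card := by
    have h3 : B.card * 3 ≤ ∑ C ∈ B, ∑ v ∈ F C, dU v := by
      have := Finset.card_nsmul_le_sum B (fun C => ∑ v ∈ F C, dU v) 3 (by
        intro C hC
        rw [hB, Finset.mem_filter] at hC
        exact Nat.not_le.mp hC.2)
      simpa using this
    have hle : ∑ C ∈ B, ∑ v ∈ F C, dU v ≤ ∑ C ∈ Finset.univ, ∑ v ∈ F C, dU v :=
      Finset.sum_le_sum_of_subset (Finset.subset_univ B)
    have htot : ∑ C ∈ Finset.univ, ∑ v ∈ F C, dU v = ∑ v : W, dU v :=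
      Finset.sum_fiberwise_of_maps_to (fun v _ => Finset.mem_univ _) dU
    have hswap : ∑ v : W, dU v ≤ 3 * U.card := by
      have : ∑ v : W, dU v = ∑ u ∈ U, (Finset.univ.filter (fun v : W => G.Adj u ↑v)).card := by
        simp only [hdU, Finset.card_filter]
        rw [Finset.sum_comm]
      rw [this]
      have hper : ∀ u ∈ U, (Finset.univ.filter (fun v : W => G.Adj u ↑v)).card ≤ 3 := by
        intro u _
        have : (Finset.univ.filter (fun v : W => G.Adj u ↑v)).card ≤
            (G.neighborFinset u).card := by
          apply Finset.card_le_card_of_injOn (Subtype.val)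
          · intro v hv
            rw [Finset.mem_coe, Finset.mem_filter] at hv
            rw [Finset.mem_coe, SimpleGraph.mem_neighborFinset]
            exact hv.2
          · intro a _ b _ hab
            exact Subtype.coe_injective hab
        rw [SimpleGraph.card_neighborFinset_eq_degree, hreg u] at this
        exact this
      calc ∑ u ∈ U, (Finset.univ.filter (fun v : W => G.Adj u ↑v)).card
          ≤ ∑ _u ∈ U, 3 := Finset.sum_le_sum hper
        _ = 3 * U.card := by rw [Finset.sum_const, smul_eq_mul, mul_comm]
    omega
  -- identify Nat.card with Ω.card
  have hcard : Nat.card {C : H.ConnectedComponent // Odd C.supp.ncard} = Ω.card := by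
    rw [Nat.card_eq_fintype_card, Fintype.card_subtype, hΩ]
    congr 1
    apply Finset.filter_congr
    intro C _
    rw [hsupp C]
  rw [hcard]
  omega
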